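/- Let G be a unique product monoid, S a G-graded ring, M a graded right S-module, and N a nonzero S-submodule of M. Then N contains an S-submodule isomorphic to bS for some nonzero homogeneous element b ∈ M. -/
import Mathlib

open DirectSum MulOpposite

set_option linter.unusedSectionVars false

section Aux
open scoped Classical
variable {G : Type*} [Monoid G] [DecidableEq G] {M : Type*} [AddCommGroup M]
  (ℳ : G → AddSubgroup M) (hd : DirectSum.IsInternal ℳ)

noncomputable def dcomp : M ≃+ ⨁ g, ℳ g :=
  (AddEquiv.ofBijective (DirectSum.coeAddMonoidHom ℳ) hd).symm

lemma dcomp_symm_apply (x : ⨁ g, ℳ g) :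
    (dcomp ℳ hd).symm x = DirectSum.coeAddMonoidHom ℳ x := rfl

noncomputable def gcomp (k : G) (m : M) : M := ((dcomp ℳ hd m) k : M)

lemma gcomp_mem (k : G) (m : M) : gcomp ℳ hd k m ∈ ℳ k := ((dcomp ℳ hd m) k).2

lemma dcomp_of_mem {g : G} {m : M} (hm : m ∈ ℳ g) :
    dcomp ℳ hd m = DirectSum.of (fun g => ℳ g) g ⟨m, hm⟩ := by
  apply (dcomp ℳ hd).symm.injective
  simp only [AddEquiv.symm_apply_apply, dcomp_symm_apply]
  simp [DirectSum.coeAddMonoidHom_of]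

lemma gcomp_of_mem {g : G} {m : M} (hm : m ∈ ℳ g) (k : G) :
    gcomp ℳ hd k m = if g = k then m else 0 := by
  rw [gcomp, dcomp_of_mem ℳ hd hm, DirectSum.of_apply]
  by_cases h : g = k
  · subst h; simp
  · simp [h]

noncomputable def gsupp (m : M) : Finset G := (dcomp ℳ hd m).support

lemma gsupp_eq_empty {m : M} (h : gsupp ℳ hd m = ∅) : m = 0 := by
  have : dcomp ℳ hd m = 0 := DFinsupp.support_eq_empty.1 h
  have := congrArg (dcomp ℳ hd).symm this
  simpa using this

lemma mem_gsupp_iff {m : M} {g : G} : g ∈ gsupp ℳ hd m ↔ gcomp ℳ hd g m ≠ 0 := by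
  rw [gsupp, DFinsupp.mem_support_iff, gcomp]
  constructor
  · intro h h0; exact h (Subtype.ext h0)
  · intro h h0; exact h (by rw [h0]; rfl)

lemma sum_gcomp (m : M) : ∑ g ∈ gsupp ℳ hd m, gcomp ℳ hd g m = m := by
  conv_rhs => rw [show m = (dcomp ℳ hd).symm (dcomp ℳ hd m) by simp]
  rw [dcomp_symm_apply]
  conv_rhs => rw [← DirectSum.sum_support_of ((dcomp ℳ hd) m)]
  rw [map_sum]
  exact Finset.sum_congr rfl (fun g _ => by simp [DirectSum.coeAddMonoidHom_of, gcomp])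

lemma gcomp_sum {ι : Type*} (T : Finset ι) (κ : ι → G) (v : ι → M)
    (hv : ∀ i ∈ T, v i ∈ ℳ (κ i)) (k : G) :
    gcomp ℳ hd k (∑ i ∈ T, v i) = ∑ i ∈ T.filter (fun i => κ i = k), v i := by
  rw [gcomp, map_sum, DFinsupp.finset_sum_apply, Finset.sum_filter]
  push_cast
  refine Finset.sum_congr rfl (fun i hi => ?_)
  rw [dcomp_of_mem ℳ hd (hv i hi), DirectSum.of_apply]
  by_cases h : κ i = k
  · subst h; simp
  · simp [h]


lemma gcomp_zero (k : G) : gcomp ℳ hd k (0 : M) = 0 := by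
  simp [gcomp, map_zero]

lemma gcomp_sub (k : G) (x y : M) :
    gcomp ℳ hd k (x - y) = gcomp ℳ hd k x - gcomp ℳ hd k y := by
  simp [gcomp, map_sub]

end Aux



/-- A unique product monoid. -/
def IsUPM (G : Type*) [Monoid G] : Prop :=
  ∀ X Y : Finset G, X.Nonempty → Y.Nonempty →
    ∃ x ∈ X, ∃ y ∈ Y, ∀ x' ∈ X, ∀ y' ∈ Y, x' * y' = x * y → x' = x ∧ y' = y

/-- Let `G` be a unique product monoid, `S` a `G`-graded ring, `M` a graded right
`S`-module, and `N` a nonzero `S`-submodule of `M`.  Then `N` contains an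
`S`-submodule isomorphic to `bS` for some nonzero homogeneous `b ∈ M`. -/
theorem stmt7 {G : Type*} [Monoid G] [DecidableEq G] (hUP : IsUPM G)
    {S : Type*} [Ring S] (𝒮 : G → AddSubgroup S)
    (hSdir : DirectSum.IsInternal 𝒮) (hone : (1 : S) ∈ 𝒮 1)
    (hmul : ∀ {g h : G} {a b : S}, a ∈ 𝒮 g → b ∈ 𝒮 h → a * b ∈ 𝒮 (g * h))
    {M : Type*} [AddCommGroup M] [Module Sᵐᵒᵖ M] (ℳ : G → AddSubgroup M)
    (hMdir : DirectSum.IsInternal ℳ)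
    (hsmul : ∀ {g h : G} {m : M} {s : S}, m ∈ ℳ g → s ∈ 𝒮 h →
      MulOpposite.op s • m ∈ ℳ (g * h))
    (N : Submodule Sᵐᵒᵖ M) (hN : N ≠ ⊥) :
    ∃ (g : G) (b : M), b ∈ ℳ g ∧ b ≠ 0 ∧
      ∃ P : Submodule Sᵐᵒᵖ M, P ≤ N ∧
        Nonempty (P ≃ₗ[Sᵐᵒᵖ] (Submodule.span Sᵐᵒᵖ ({b} : Set M))) := by
    classical
  -- cancellativity of G
  have rcancel : ∀ a b c : G, a * c = b * c → a = b := by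
    intro a b c hab
    obtain ⟨x, hx, y, hy, hu⟩ := hUP {a, b} {c} ⟨a, by simp⟩ ⟨c, by simp⟩
    have hyc : y = c := by simpa using hy
    subst hyc
    rcases (by simpa using hx : x = a ∨ x = b) with rfl | rfl
    · exact ((hu b (by simp) y (by simp) hab.symm).1).symm
    · exact (hu a (by simp) y (by simp) hab).1
  have lcancel : ∀ a b c : G, a * b = a * c → b = c := by
    intro a b c hab
    obtain ⟨x, hx, y, hy, hu⟩ := hUP {a} {b, c} ⟨a, by simp⟩ ⟨b, by simp⟩
    have hxa : x = a := by simpa using hx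
    subst hxa
    rcases (by simpa using hy : y = b ∨ y = c) with rfl | rfl
    · exact ((hu x (by simp) c (by simp) hab.symm).2).symm
    · exact (hu x (by simp) b (by simp) hab).2
  -- choose a nonzero element of N with minimal support
  obtain ⟨m0, hm0N, hm00⟩ := (Submodule.ne_bot_iff N).1 hN
  have hSne : ({n | ∃ x, x ∈ N ∧ x ≠ 0 ∧ (gsupp ℳ hMdir x).card = n} : Set ℕ).Nonempty :=
    ⟨_, m0, hm0N, hm00, rfl⟩
  obtain ⟨m, hmN, hm0, hcard⟩ := Nat.sInf_mem hSne
  have hmin : ∀ x, x ∈ N → x ≠ 0 →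
      (gsupp ℳ hMdir m).card ≤ (gsupp ℳ hMdir x).card := by
    intro x hx hx0; rw [hcard]; exact Nat.sInf_le ⟨x, hx, hx0, rfl⟩
  have hTne : (gsupp ℳ hMdir m).Nonempty :=
    Finset.nonempty_of_ne_empty (fun h => hm0 (gsupp_eq_empty _ _ h))
  obtain ⟨g0, hg0⟩ := hTne
  set b := gcomp ℳ hMdir g0 m with hbdef
  have hbmem : b ∈ ℳ g0 := gcomp_mem _ _ _ _
  have hbne : b ≠ 0 := (mem_gsupp_iff _ _).1 hg0
  -- components of (op s') • m for homogeneous s'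
  have K1 : ∀ (h : G) (s' : S), s' ∈ 𝒮 h → ∀ k,
      gcomp ℳ hMdir k (op s' • m)
        = ∑ g ∈ (gsupp ℳ hMdir m).filter (fun g => g * h = k),
            op s' • gcomp ℳ hMdir g m := by
    intro h s' hs' k
    conv_lhs => rw [← sum_gcomp ℳ hMdir m, Finset.smul_sum]
    exact gcomp_sum ℳ hMdir _ (fun g => g * h) _
      (fun g _ => hsmul (gcomp_mem ℳ hMdir g m) hs') k
  have K2 : ∀ (h : G) (s' : S), s' ∈ 𝒮 h → ∀ g' ∈ gsupp ℳ hMdir m,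
      gcomp ℳ hMdir (g' * h) (op s' • m) = op s' • gcomp ℳ hMdir g' m := by
    intro h s' hs' g' hg'
    rw [K1 h s' hs']
    rw [show (gsupp ℳ hMdir m).filter (fun g => g * h = g' * h) = {g'} from ?_]
    · simp
    · ext g
      simp only [Finset.mem_filter, Finset.mem_singleton]
      constructor
      · rintro ⟨-, hgh⟩; exact rcancel _ _ _ hgh
      · rintro rfl; exact ⟨hg', rfl⟩
  -- lemB : if one homogeneous component of m is killed, all of m is killed
  have lemB : ∀ (h : G) (s' : S), s' ∈ 𝒮 h → ∀ g ∈ gsupp ℳ hMdir m,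
      op s' • gcomp ℳ hMdir g m = 0 → op s' • m = 0 := by
    intro h s' hs' g hg hzero
    by_contra hne
    have hsub : gsupp ℳ hMdir (op s' • m)
        ⊆ ((gsupp ℳ hMdir m).erase g).image (fun g' => g' * h) := by
      intro k hk
      have hk' := (mem_gsupp_iff ℳ hMdir).1 hk
      rw [K1 h s' hs' k] at hk'
      obtain ⟨g', hg', hne'⟩ := Finset.exists_ne_zero_of_sum_ne_zero hk'
      simp only [Finset.mem_filter] at hg'
      refine Finset.mem_image.2 ⟨g', Finset.mem_erase.2 ⟨?_, hg'.1⟩, hg'.2⟩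
      rintro rfl; exact hne' hzero
    have h1 := hmin _ (N.smul_mem _ hmN) hne
    have h2 := Finset.card_le_card hsub
    have h3 := Finset.card_image_le (s := (gsupp ℳ hMdir m).erase g)
      (f := fun g' => g' * h)
    have h4 : ((gsupp ℳ hMdir m).erase g).card < (gsupp ℳ hMdir m).card :=
      Finset.card_erase_lt_of_mem hg
    omega
  -- consequences
  have homogAll : ∀ (h : G) (s' : S), s' ∈ 𝒮 h → ∀ g ∈ gsupp ℳ hMdir m,
      op s' • gcomp ℳ hMdir g m = 0 → op s' • b = 0 := by
    intro h s' hs' g hg hzero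
    have hm' := lemB h s' hs' g hg hzero
    have := K2 h s' hs' g0 hg0
    rw [hm', gcomp_zero] at this
    exact this.symm
  have homogRev : ∀ (h : G) (s' : S), s' ∈ 𝒮 h → op s' • b = 0 → op s' • m = 0 :=
    fun h s' hs' hz => lemB h s' hs' g0 hg0 hz
  -- decomposition of op s • x for general s and homogeneous x
  have hdecS : ∀ (s : S) (x : M),
      op s • x = ∑ h ∈ gsupp 𝒮 hSdir s, op (gcomp 𝒮 hSdir h s) • x := by
    intro s x
    conv_lhs => rw [← sum_gcomp 𝒮 hSdir s]
    rw [← Finset.sum_smul]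
    congr 1
    exact map_sum (opAddEquiv : S ≃+ Sᵐᵒᵖ) _ _
  -- direction C : op s • m = 0 → op s • b = 0, by induction on support of s
  have dirC : ∀ (n : ℕ) (s : S), (gsupp 𝒮 hSdir s).card = n →
      op s • m = 0 → op s • b = 0 := by
    intro n
    induction n using Nat.strong_induction_on with
    | _ n ih =>
      intro s hcards hsm
      rcases Finset.eq_empty_or_nonempty (gsupp 𝒮 hSdir s) with he | hne
      · have hs0 : s = 0 := gsupp_eq_empty _ _ he
        subst hs0; simp
      · obtain ⟨g, hgT, h, hhU, huniq⟩ :=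
          hUP (gsupp ℳ hMdir m) (gsupp 𝒮 hSdir s) ⟨g0, hg0⟩ hne
        set sh := gcomp 𝒮 hSdir h s with hshdef
        have hshmem : sh ∈ 𝒮 h := gcomp_mem _ _ _ _
        have hds : op s • m = ∑ p ∈ (gsupp 𝒮 hSdir s) ×ˢ (gsupp ℳ hMdir m),
            op (gcomp 𝒮 hSdir p.1 s) • gcomp ℳ hMdir p.2 m := by
          rw [hdecS s m, Finset.sum_product]
          refine Finset.sum_congr rfl (fun h' _ => ?_)
          conv_lhs => rw [← sum_gcomp ℳ hMdir m, Finset.smul_sum]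
        have hcompgh : gcomp ℳ hMdir (g * h) (op s • m)
            = op sh • gcomp ℳ hMdir g m := by
          rw [hds, gcomp_sum ℳ hMdir ((gsupp 𝒮 hSdir s) ×ˢ (gsupp ℳ hMdir m))
            (fun p => p.2 * p.1)
            (fun p => op (gcomp 𝒮 hSdir p.1 s) • gcomp ℳ hMdir p.2 m)
            (fun p _ => hsmul (gcomp_mem _ _ _ _) (gcomp_mem _ _ _ _)) (g * h)]
          rw [show ((gsupp 𝒮 hSdir s) ×ˢ (gsupp ℳ hMdir m)).filter
              (fun p => p.2 * p.1 = g * h) = {(h, g)} from ?_]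
          · simp [hshdef]
          · ext p
            simp only [Finset.mem_filter, Finset.mem_product, Finset.mem_singleton]
            constructor
            · rintro ⟨⟨h1, h2⟩, h3⟩
              obtain ⟨hq1, hq2⟩ := huniq p.2 h2 p.1 h1 h3
              exact Prod.ext hq2 hq1
            · rintro rfl; exact ⟨⟨hhU, hgT⟩, rfl⟩
        have hkill : op sh • gcomp ℳ hMdir g m = 0 := by
          rw [← hcompgh, hsm, gcomp_zero]
        have hshb : op sh • b = 0 := homogAll h sh hshmem g hgT hkill
        have hshm : op sh • m = 0 := lemB h sh hshmem g hgT hkill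
        -- support of s - sh is strictly smaller
        have hsub : gsupp 𝒮 hSdir (s - sh) ⊆ (gsupp 𝒮 hSdir s).erase h := by
          intro k hk
          have hk' := (mem_gsupp_iff 𝒮 hSdir).1 hk
          rw [gcomp_sub] at hk'
          rw [gcomp_of_mem 𝒮 hSdir hshmem k] at hk'
          by_cases hkh : h = k
          · subst hkh
            exfalso; apply hk'
            simp [hshdef]
          · rw [Finset.mem_erase]
            refine ⟨fun hh => hkh hh.symm, (mem_gsupp_iff 𝒮 hSdir).2 ?_⟩
            simpa [hkh] using hk'
        have hcardlt : (gsupp 𝒮 hSdir (s - sh)).card < n := by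
          have h2 := Finset.card_le_card hsub
          have h4 : ((gsupp 𝒮 hSdir s).erase h).card < (gsupp 𝒮 hSdir s).card :=
            Finset.card_erase_lt_of_mem hhU
          omega
        have hsubm : op (s - sh) • m = 0 := by
          rw [op_sub, sub_smul, hsm, hshm, sub_zero]
        have hsubb : op (s - sh) • b = 0 :=
          ih _ hcardlt (s - sh) rfl hsubm
        have : op s • b = op sh • b + op (s - sh) • b := by
          rw [← add_smul, ← op_add, add_sub_cancel]
        rw [this, hshb, hsubb, add_zero]
  -- direction D : op s • b = 0 → op s • m = 0
  have dirD : ∀ (s : S), op s • b = 0 → op s • m = 0 := by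
    intro s hsb
    have hcomp : ∀ h' ∈ gsupp 𝒮 hSdir s, op (gcomp 𝒮 hSdir h' s) • b = 0 := by
      intro h' hh'
      have h1 : gcomp ℳ hMdir (g0 * h') (op s • b)
          = ∑ h ∈ (gsupp 𝒮 hSdir s).filter (fun h => g0 * h = g0 * h'),
              op (gcomp 𝒮 hSdir h s) • b := by
        conv_lhs => rw [hdecS s b]
        exact gcomp_sum ℳ hMdir _ (fun h => g0 * h) _
          (fun h _ => hsmul hbmem (gcomp_mem _ _ _ _)) (g0 * h')
      rw [hsb, gcomp_zero] at h1
      rw [show (gsupp 𝒮 hSdir s).filter (fun h => g0 * h = g0 * h') = {h'} from ?_] at h1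
      · simpa using h1.symm
      · ext h
        simp only [Finset.mem_filter, Finset.mem_singleton]
        constructor
        · rintro ⟨-, hgh⟩; exact lcancel _ _ _ hgh
        · rintro rfl; exact ⟨hh', rfl⟩
    rw [hdecS s m]
    refine Finset.sum_eq_zero (fun h' hh' => ?_)
    exact homogRev h' _ (gcomp_mem _ _ _ _) (hcomp h' hh')
  -- assemble the isomorphism
  set f : Sᵐᵒᵖ →ₗ[Sᵐᵒᵖ] M := LinearMap.toSpanSingleton Sᵐᵒᵖ M m with hf
  set fb : Sᵐᵒᵖ →ₗ[Sᵐᵒᵖ] M := LinearMap.toSpanSingleton Sᵐᵒᵖ M b with hfb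
  have hker : LinearMap.ker f = LinearMap.ker fb := by
    ext t
    simp only [LinearMap.mem_ker, hf, hfb, LinearMap.toSpanSingleton_apply]
    rw [← op_unop t]
    exact ⟨fun ht => dirC _ (unop t) rfl ht, fun ht => dirD (unop t) ht⟩
  refine ⟨g0, b, hbmem, hbne, Submodule.span Sᵐᵒᵖ {m}, ?_, ?_⟩
  · rw [Submodule.span_le, Set.singleton_subset_iff]; exact hmN
  · refine ⟨?_⟩
    have e1 : (Submodule.span Sᵐᵒᵖ ({m} : Set M)) ≃ₗ[Sᵐᵒᵖ] LinearMap.range f :=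
      LinearEquiv.ofEq _ _ (LinearMap.span_singleton_eq_range Sᵐᵒᵖ M m)
    have e3 := Submodule.quotEquivOfEq _ _ hker
    have e5 : LinearMap.range fb ≃ₗ[Sᵐᵒᵖ] Submodule.span Sᵐᵒᵖ ({b} : Set M) :=
      (LinearEquiv.ofEq _ _ (LinearMap.span_singleton_eq_range Sᵐᵒᵖ M b)).symm
    exact e1.trans ((f.quotKerEquivRange.symm).trans
      (e3.trans (fb.quotKerEquivRange.trans e5)))
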